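/- Let U ⊂ ℝ^d ∖ {0} be open, γ : ℝ → ℝ^d a C^N curve, and σ : U → ℝ differentiable, such that ⟨γ^{(N−1)}(σ(ξ)), ξ⟩ = 0 for all ξ ∈ U. Suppose moreover that |⟨γ^{(N)}(σ(ξ)), ξ⟩| ≥ c|ξ| and |γ^{(N−1)}(σ(ξ))| ≤ M for all ξ ∈ U, where c > 0. Then |∇σ(ξ)| ≤ M/(c|ξ|) for all ξ ∈ U. -/
import Mathlib


open scoped RealInnerProductSpace

theorem stmt13 {d N : ℕ} (hd : 1 ≤ d) (hN : 2 ≤ N)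
    (U : Set (EuclideanSpace ℝ (Fin d))) (hU : IsOpen U)
    (hU0 : (0 : EuclideanSpace ℝ (Fin d)) ∉ U)
    (γ : ℝ → EuclideanSpace ℝ (Fin d)) (hγ : ContDiff ℝ N γ)
    (σ : EuclideanSpace ℝ (Fin d) → ℝ) (hσ : ∀ ξ ∈ U, DifferentiableAt ℝ σ ξ)
    (c M : ℝ) (hc : 0 < c) (hM : 0 ≤ M)
    (hzero : ∀ ξ ∈ U, ⟪iteratedDeriv (N - 1) γ (σ ξ), ξ⟫ = 0)
    (hlow : ∀ ξ ∈ U, c * ‖ξ‖ ≤ |⟪iteratedDeriv N γ (σ ξ), ξ⟫|)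
    (hbd : ∀ ξ ∈ U, ‖iteratedDeriv (N - 1) γ (σ ξ)‖ ≤ M) :
    ∀ ξ ∈ U, ‖gradient σ ξ‖ ≤ M / (c * ‖ξ‖) := by
  intro ξ hξ
  have hξ0 : ξ ≠ 0 := fun h => hU0 (h ▸ hξ)
  have hξn : (0:ℝ) < ‖ξ‖ := norm_pos_iff.mpr hξ0
  set g : ℝ → EuclideanSpace ℝ (Fin d) := iteratedDeriv (N - 1) γ with hgdef
  set A : EuclideanSpace ℝ (Fin d) := iteratedDeriv N γ (σ ξ) with hA
  set B : EuclideanSpace ℝ (Fin d) := g (σ ξ) with hB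
  -- g is differentiable with derivative iteratedDeriv N γ
  have hgd : HasDerivAt g A (σ ξ) := by
    have hlt : ((N - 1 : ℕ) : WithTop ℕ∞) < (N : WithTop ℕ∞) := by
      exact Nat.cast_lt.mpr (Nat.sub_lt (by omega) one_pos)
    have h1 : DifferentiableAt ℝ g (σ ξ) :=
      (hγ.differentiable_iteratedDeriv (N - 1) hlt).differentiableAt
    have h2 := h1.hasDerivAt
    have h3 : deriv g (σ ξ) = A := by
      rw [hA, show N = (N - 1) + 1 by omega, iteratedDeriv_succ]
    rwa [h3] at h2
  set σ' : EuclideanSpace ℝ (Fin d) →L[ℝ] ℝ := fderiv ℝ σ ξ with hσ'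
  have hσξ : HasFDerivAt σ σ' ξ := (hσ ξ hξ).hasFDerivAt
  have hcomp : HasFDerivAt (fun x => g (σ x))
      (((1 : ℝ →L[ℝ] ℝ).smulRight A).comp σ') ξ :=
    (hasDerivAt_iff_hasFDerivAt.mp hgd).comp ξ hσξ
  have hid : HasFDerivAt (fun x : EuclideanSpace ℝ (Fin d) => x) (ContinuousLinearMap.id ℝ (EuclideanSpace ℝ (Fin d))) ξ := hasFDerivAt_id ξ
  have hF := hcomp.inner ℝ hid
  have hF0 : HasFDerivAt (fun x => ⟪g (σ x), x⟫) (0 : EuclideanSpace ℝ (Fin d) →L[ℝ] ℝ) ξ := by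
    have heq : (fun x => ⟪g (σ x), x⟫) =ᶠ[nhds ξ] fun _ => (0:ℝ) :=
      Filter.eventuallyEq_of_mem (hU.mem_nhds hξ) hzero
    exact (hasFDerivAt_const (0:ℝ) ξ).congr_of_eventuallyEq heq
  have hDeq := hF.unique hF0
  -- For every v : ⟪B, v⟫ + σ' v * ⟪A, ξ⟫ = 0
  have key : ∀ v : EuclideanSpace ℝ (Fin d), ⟪B, v⟫ + σ' v * ⟪A, ξ⟫ = 0 := by
    intro v
    have := congrArg (fun (L : EuclideanSpace ℝ (Fin d) →L[ℝ] ℝ) => L v) hDeq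
    simp only [ContinuousLinearMap.comp_apply, ContinuousLinearMap.prod_apply,
      fderivInnerCLM_apply, ContinuousLinearMap.smulRight_apply,
      ContinuousLinearMap.one_apply, ContinuousLinearMap.id_apply,
      ContinuousLinearMap.zero_apply, real_inner_smul_left, smul_eq_mul, one_mul] at this
    linear_combination this
  have hAξ : c * ‖ξ‖ ≤ |⟪A, ξ⟫| := hlow ξ hξ
  have hAξ0 : (0:ℝ) < |⟪A, ξ⟫| := lt_of_lt_of_le (mul_pos hc hξn) hAξ
  have hBle : ‖B‖ ≤ M := hbd ξ hξ
  have hop : ‖σ'‖ ≤ M / (c * ‖ξ‖) := by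
    apply ContinuousLinearMap.opNorm_le_bound _ (div_nonneg hM (mul_pos hc hξn).le)
    intro v
    have h1 : σ' v * ⟪A, ξ⟫ = -⟪B, v⟫ := by linarith [key v]
    have h2 : |σ' v| * |⟪A, ξ⟫| = |⟪B, v⟫| := by
      rw [← abs_mul, h1, abs_neg]
    have h3 : |⟪B, v⟫| ≤ M * ‖v‖ :=
      le_trans (abs_real_inner_le_norm B v) (by
        exact mul_le_mul_of_nonneg_right hBle (norm_nonneg v))
    have h4 : |σ' v| ≤ M * ‖v‖ / |⟪A, ξ⟫| := by
      rw [le_div_iff₀ hAξ0, h2]; exact h3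
    calc ‖σ' v‖ = |σ' v| := rfl
      _ ≤ M * ‖v‖ / |⟪A, ξ⟫| := h4
      _ ≤ M * ‖v‖ / (c * ‖ξ‖) := by
          apply div_le_div_of_nonneg_left (by positivity) (mul_pos hc hξn) hAξ
      _ = M / (c * ‖ξ‖) * ‖v‖ := by ring
  have : ‖gradient σ ξ‖ = ‖σ'‖ := by
    rw [gradient, hσ']
    exact LinearIsometryEquiv.norm_map _ _
  rw [this]
  exact hop
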